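/- arXiv:1104.5185 — 2 statements merged into one kernel-verified Lean document; each statement's English description precedes it below -/
import Mathlib

section
/- Let (X, d) be a metric space and f : X → X a continuous map. If z is a positively recurrent point of f, then z is a positively recurrent point of f^q for every positive integer q. -/
open Filter Topology

/-- `z` is a positively recurrent point of `g`: some subsequence of the forward orbit
of `z` converges to `z`. -/
def PosRec {X : Type*} [TopologicalSpace X] (g : X → X) (z : X) : Prop :=
  ∃ φ : ℕ → ℕ, StrictMono φ ∧ Tendsto (fun k => g^[φ k] z) atTop (𝓝 z)

lemma posRec_of_freq {X : Type*} [MetricSpace X] (g : X → X) (z : X)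
    (h : ∀ ε : ℝ, 0 < ε → ∀ N : ℕ, ∃ n, N ≤ n ∧ dist (g^[n] z) z < ε) :
    PosRec g z := by
  have hfreq : ∀ i : ℕ, ∃ᶠ n in atTop, dist (g^[n] z) z < 1 / (i + 1) := by
    intro i
    rw [Filter.frequently_atTop]
    intro N
    obtain ⟨n, hn, hd⟩ := h (1 / (i + 1)) (by positivity) N
    exact ⟨n, hn, hd⟩
  obtain ⟨φ, hφ, hdist⟩ := Filter.extraction_forall_of_frequently hfreq
  refine ⟨φ, hφ, ?_⟩
  rw [Metric.tendsto_atTop]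
  intro ε hε
  obtain ⟨K, hK⟩ := exists_nat_one_div_lt hε
  refine ⟨K, fun k hk => ?_⟩
  calc dist (g^[φ k] z) z < 1 / (k + 1) := hdist k
    _ ≤ 1 / (K + 1) := by
        apply one_div_le_one_div_of_le (by positivity)
        exact_mod_cast Nat.succ_le_succ hk
    _ < ε := hK

lemma freq_of_posRec {X : Type*} [MetricSpace X] (g : X → X) (z : X)
    (h : PosRec g z) :
    ∀ ε : ℝ, 0 < ε → ∀ N : ℕ, ∃ n, N ≤ n ∧ dist (g^[n] z) z < ε := by
  obtain ⟨φ, hφ, hconv⟩ := h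
  intro ε hε N
  rw [Metric.tendsto_atTop] at hconv
  obtain ⟨K, hK⟩ := hconv ε hε
  refine ⟨φ (max K N), le_trans (le_max_right K N) (hφ.le_apply), hK _ (le_max_left K N)⟩

/-- Lemma 6.1: in a metric space, a positively recurrent point of a continuous map `f`
is also a positively recurrent point of `f^q` for every positive integer `q`. -/
theorem posRec_iterate {X : Type*} [MetricSpace X] (f : X → X) (hf : Continuous f)
    (z : X) (hz : PosRec f z) (q : ℕ) (hq : 0 < q) :
    PosRec (f^[q]) z := by
  have hrec := freq_of_posRec f z hz
  -- main combinatorial claim: returns at times divisible by q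
  have main : ∀ ε : ℝ, 0 < ε → ∀ N : ℕ, ∃ m, N ≤ m ∧ q ∣ m ∧ dist (f^[m] z) z < ε := by
    intro ε hε N
    -- one step of the nested ball construction
    have key : ∀ e : {e : ℝ // 0 < e}, ∃ p : {e : ℝ // 0 < e} × ℕ,
        p.1.1 ≤ e.1 ∧ N ≤ p.2 ∧ ∀ x, dist x z < p.1.1 → dist (f^[p.2] x) z < e.1 := by
      rintro ⟨e, he⟩
      obtain ⟨n, hn, hd⟩ := hrec (e / 2) (by positivity) N
      have hcont : ContinuousAt (f^[n]) z := (hf.iterate n).continuousAt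
      rw [Metric.continuousAt_iff] at hcont
      obtain ⟨δ, hδ, hδ'⟩ := hcont (e / 2) (by positivity)
      refine ⟨⟨⟨min δ e, lt_min hδ he⟩, n⟩, min_le_right _ _, hn, fun x hx => ?_⟩
      have h1 : dist (f^[n] x) (f^[n] z) < e / 2 := hδ' (lt_of_lt_of_le hx (min_le_left _ _))
      calc dist (f^[n] x) z ≤ dist (f^[n] x) (f^[n] z) + dist (f^[n] z) z := dist_triangle _ _ _
        _ < e / 2 + e / 2 := add_lt_add h1 hd
        _ = e := add_halves e
    choose step hle hN hball using key
    -- iterate the construction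
    let F : ℕ → {e : ℝ // 0 < e} × ℕ :=
      fun i => Nat.rec (⟨⟨ε, hε⟩, 0⟩) (fun _ p => step p.1) i
    let E : ℕ → {e : ℝ // 0 < e} := fun i => (F i).1
    let n : ℕ → ℕ := fun i => (F i).2
    have hF : ∀ i, F (i + 1) = step (E i) := fun i => rfl
    have hEmono : ∀ i, (E (i + 1)).1 ≤ (E i).1 := fun i => hle (E i)
    have hEle : ∀ i, (E i).1 ≤ ε := by
      intro i
      induction i with
      | zero => exact le_refl _
      | succ i ih => exact le_trans (hEmono i) ih
    have hnN : ∀ i, N ≤ n (i + 1) := fun i => hN (E i)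
    have hb : ∀ i x, dist x z < (E (i + 1)).1 → dist (f^[n (i + 1)] x) z < (E i).1 :=
      fun i x hx => hball (E i) x hx
    -- partial sums of the return times
    set T : ℕ → ℕ → ℕ := fun i j => ∑ k ∈ Finset.Ico i j, n (k + 1) with hT
    have hTsplit : ∀ i d, T i (i + d + 1) = n (i + 1) + T (i + 1) (i + d + 1) := by
      intro i d
      rw [hT]
      exact Finset.sum_eq_sum_Ico_succ_bot (by omega) _
    have claim : ∀ d i, dist (f^[T i (i + d)] z) z < (E i).1 := by
      intro d
      induction d with
      | zero =>
        intro i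
        simp only [hT, Nat.add_zero, Finset.Ico_self, Finset.sum_empty,
          Function.iterate_zero, id_eq, dist_self]
        exact (E i).2
      | succ d ih =>
        intro i
        have h1 : dist (f^[T (i + 1) (i + 1 + d)] z) z < (E (i + 1)).1 := ih (i + 1)
        have h2 := hb i _ h1
        rw [← Function.iterate_add_apply] at h2
        have heq : T i (i + (d + 1)) = n (i + 1) + T (i + 1) (i + 1 + d) := by
          rw [show i + (d + 1) = i + d + 1 from by omega, hTsplit i d,
            show i + 1 + d = i + d + 1 from by omega]
        rw [heq]
        exact h2
    -- pigeonhole on residues of S j := T 0 j mod q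
    have pigeon : ∃ i j, i < j ∧ j ≤ q ∧ T 0 i % q = T 0 j % q := by
      have hcard : (Finset.range q).card < (Finset.range (q + 1)).card := by
        simp
      obtain ⟨a, ha, b, hb', hab, heq⟩ :=
        Finset.exists_ne_map_eq_of_card_lt_of_maps_to hcard
          (fun j (_ : j ∈ Finset.range (q + 1)) =>
            Finset.mem_range.mpr (Nat.mod_lt _ hq) : ∀ j ∈ Finset.range (q + 1),
              T 0 j % q ∈ Finset.range q)
      rcases lt_or_gt_of_ne hab with h | h
      · exact ⟨a, b, h, by simpa using Nat.lt_succ_iff.mp (Finset.mem_range.mp hb'), heq⟩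
      · exact ⟨b, a, h, by simpa using Nat.lt_succ_iff.mp (Finset.mem_range.mp ha), heq.symm⟩
    obtain ⟨i, j, hij, hjq, hres⟩ := pigeon
    have hTsum : T 0 i + T i j = T 0 j := by
      rw [hT]
      exact Finset.sum_Ico_consecutive _ (Nat.zero_le i) hij.le
    have hdvd : q ∣ T i j := by
      have hle' : T 0 i ≤ T 0 j := by omega
      have := (Nat.modEq_iff_dvd' hle').mp hres
      have hij' : T i j = T 0 j - T 0 i := by omega
      rwa [hij']
    have hTN : N ≤ T i j := by
      have hmem : j - 1 ∈ Finset.Ico i j := by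
        rw [Finset.mem_Ico]; omega
      calc N ≤ n (j - 1 + 1) := hnN _
        _ ≤ T i j := by
          rw [hT]
          exact Finset.single_le_sum (f := fun k => n (k + 1)) (fun k _ => Nat.zero_le _) hmem
    refine ⟨T i j, hTN, hdvd, ?_⟩
    have := claim (j - i) i
    rw [show i + (j - i) = j from by omega] at this
    exact lt_of_lt_of_le this (hEle i)
  -- conclude
  apply posRec_of_freq
  intro ε hε M
  obtain ⟨m, hm, hdvd, hd⟩ := main ε hε (q * M)
  obtain ⟨k, rfl⟩ := hdvd
  refine ⟨k, ?_, ?_⟩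
  · exact Nat.le_of_mul_le_mul_left hm hq
  · rw [← Function.iterate_mul]
    exact hd
end

section
/- Let f be a homeomorphism of the open annulus 𝔸 isotopic to the identity and F a lift of f to ℝ². For an integer q ≥ 1, let f_q be the homeomorphism of the annulus 𝔸_q = ℝ²/T^q lifted by F, and let π_q : ℝ² → 𝔸_q be the covering map. If z ∈ Rec⁺(f) and z̃ ∈ π^{−1}(z), then π_q(z̃) ∈ Rec⁺(f_q^q). -/
open Filter Topology Set

noncomputable section

/-- The plane ℝ². -/
abbrev Plane := ℝ × ℝ

/-- The open annulus 𝔸 = ℝ/ℤ × ℝ. -/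
abbrev Ann := AddCircle (1 : ℝ) × ℝ

/-- The covering map π : ℝ² → 𝔸, (x,y) ↦ (x + ℤ, y). -/
def prj : Plane → Ann := fun p => ((p.1 : AddCircle (1 : ℝ)), p.2)

/-- The deck transformation T^k : ℝ² → ℝ², (x,y) ↦ (x + k, y). -/
def Tr (k : ℤ) : Plane → Plane := fun p => (p.1 + (k : ℝ), p.2)

/-- `F` is a lift of `f` to the universal cover ℝ² of the annulus. -/
def IsLift (f : Ann ≃ₜ Ann) (F : Plane ≃ₜ Plane) : Prop :=
  ∀ p : Plane, prj (F p) = f (prj p)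

/-- `f` is isotopic to the identity: there is a continuous family of homeomorphisms
joining the identity to `f`. -/
def IsotopicToId (f : Ann ≃ₜ Ann) : Prop :=
  ∃ H : ℝ → Ann → Ann,
    Continuous (fun q : ℝ × Ann => H q.1 q.2) ∧
    (∀ t : ℝ, ∃ h : Ann ≃ₜ Ann, ∀ z, H t z = h z) ∧
    (∀ z, H 0 z = z) ∧ (∀ z, H 1 z = f z)

/-- An essential circle in 𝔸: a simple closed curve which is not null-homotopic. -/
def IsEssentialCircle (c : Set Ann) : Prop :=
  ∃ φ : C(AddCircle (1 : ℝ), Ann), Function.Injective φ ∧ Set.range φ = c ∧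
    ¬ ∃ pt : Ann, φ.Homotopic (ContinuousMap.const _ pt)

/-- `f` has the intersection property: every essential circle meets its image. -/
def IntersectionProperty (f : Ann → Ann) : Prop :=
  ∀ c : Set Ann, IsEssentialCircle c → (c ∩ f '' c).Nonempty

/-- The positively recurrent point `z` has rotation number `ρ` for the lift `F` of `f`. -/
def HasRotNum (f : Ann → Ann) (F : Plane → Plane) (z : Ann) (ρ : ℝ) : Prop :=
  PosRec f z ∧
    ∀ zt : Plane, prj zt = z →
      ∀ φ : ℕ → ℕ, StrictMono φ →
        Tendsto (fun k => f^[φ k] z) atTop (𝓝 z) →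
        Tendsto (fun k => ((F^[φ k] zt).1 - zt.1) / (φ k : ℝ)) atTop (𝓝 ρ)

/-- The rotation set Rot(F): the set of rotation numbers of positively recurrent
points of `f`. -/
def Rot (f : Ann → Ann) (F : Plane → Plane) : Set ℝ := {ρ | ∃ z, HasRotNum f F z ρ}

/-- The region `L(Γ)` of the plane on the left (west) of a line `Γ` (as a subset of ℝ²):
points lying in the connected component of the complement of `Γ` containing all far-west
points of the horizontal axis. -/
def Lset (Γ : Set Plane) : Set Plane :=
  {p | ∃ s : ℝ, ∀ x ≤ s, p ∈ connectedComponentIn Γᶜ ((x, 0) : Plane)}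

/-- The region `R(Γ)` of the plane on the right (east) of a line `Γ`. -/
def Rset (Γ : Set Plane) : Set Plane :=
  {p | ∃ s : ℝ, ∀ x ≥ s, p ∈ connectedComponentIn Γᶜ ((x, 0) : Plane)}

/-- The relation `Γ₁ < Γ₂` on (essential, oriented from south to north) lines:
`Cl(L(Γ₁)) ⊆ L(Γ₂)`. -/
def lineLT (Γ₁ Γ₂ : Set Plane) : Prop := closure (Lset Γ₁) ⊆ Lset Γ₂

/-- An essential line in ℝ², oriented from south to north: a properly embedded copy of ℝ
whose second coordinate tends to ±∞ at ±∞. -/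
def IsEssLinePlane (Γ : ℝ → Plane) : Prop :=
  Continuous Γ ∧ Function.Injective Γ ∧ IsProperMap Γ ∧
    Tendsto (fun t => (Γ t).2) atTop atTop ∧ Tendsto (fun t => (Γ t).2) atBot atBot

/-- An essential line in the annulus 𝔸: a properly embedded simple path joining one end
to the other. -/
def IsEssLineAnn (γ : ℝ → Ann) : Prop :=
  Continuous γ ∧ Function.Injective γ ∧ IsProperMap γ ∧
    ((Tendsto (fun t => (γ t).2) atTop atTop ∧ Tendsto (fun t => (γ t).2) atBot atBot) ∨
     (Tendsto (fun t => (γ t).2) atTop atBot ∧ Tendsto (fun t => (γ t).2) atBot atTop))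

/-- An oriented essential line in 𝔸 joining the lower end S to the upper end N. -/
def IsEssLineAnnSN (γ : ℝ → Ann) : Prop :=
  Continuous γ ∧ Function.Injective γ ∧ IsProperMap γ ∧
    Tendsto (fun t => (γ t).2) atTop atTop ∧ Tendsto (fun t => (γ t).2) atBot atBot

/-- The covering map `π_q : ℝ² → 𝔸_q = ℝ²/T^q`. -/
def prjq (q : ℕ) : Plane → AddCircle (q : ℝ) × ℝ :=
  fun p => ((p.1 : AddCircle (q : ℝ)), p.2)

namespace Lem62

lemma intConst {g : Plane → ℝ} (hc : Continuous g) (hint : ∀ p, ∃ n : ℤ, g p = n)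
    (p p' : Plane) : g p = g p' := by
  have key : ∀ x y : Plane, ¬ (g x < g y) := by
    intro x y hxy
    obtain ⟨nx, hnx⟩ := hint x
    obtain ⟨ny, hny⟩ := hint y
    have hlt : (nx : ℝ) < (ny : ℝ) := by rw [← hnx, ← hny]; exact hxy
    have hle : (nx : ℝ) + 1 ≤ (ny : ℝ) := by exact_mod_cast Int.cast_lt.mp hlt
    have hmem : ((nx : ℝ) + 1/2) ∈ Icc (g x) (g y) :=
      ⟨by rw [hnx]; linarith, by rw [hny]; linarith⟩
    have hsub : Icc (g x) (g y) ⊆ Set.range g :=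
      ((isPreconnected_range hc).ordConnected).out ⟨x, rfl⟩ ⟨y, rfl⟩
    obtain ⟨pz, hpz⟩ := hsub hmem
    obtain ⟨nz, hnz⟩ := hint pz
    have hcast : ((2*nz : ℤ) : ℝ) = ((2*nx + 1 : ℤ) : ℝ) := by
      push_cast
      rw [hpz] at hnz
      linarith
    have := Int.cast_injective hcast
    omega
  rcases lt_trichotomy (g p) (g p') with h | h | h
  · exact absurd h (key _ _)
  · exact h
  · exact absurd h (key _ _)

lemma deckRigid (D : Plane → Plane) (hc : Continuous D) (h : ∀ p, prj (D p) = prj p) :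
    ∃ n : ℤ, ∀ p, D p = Tr n p := by
  have h1 : ∀ p : Plane, ((D p).1 : AddCircle (1:ℝ)) = ((p.1 : ℝ) : AddCircle (1:ℝ)) :=
    fun p => (Prod.ext_iff.mp (h p)).1
  have h2 : ∀ p : Plane, (D p).2 = p.2 := fun p => (Prod.ext_iff.mp (h p)).2
  have hint : ∀ p : Plane, ∃ n : ℤ, (D p).1 - p.1 = (n : ℝ) := by
    intro p
    have hm := (QuotientAddGroup.eq_iff_sub_mem).mp (h1 p)
    obtain ⟨k, hk⟩ := AddSubgroup.mem_zmultiples_iff.mp hm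
    exact ⟨k, by rw [← hk]; simp [zsmul_eq_mul]⟩
  have hgc : Continuous fun p : Plane => (D p).1 - p.1 :=
    (continuous_fst.comp hc).sub continuous_fst
  obtain ⟨n₀, hn₀⟩ := hint (0, 0)
  refine ⟨n₀, fun p => ?_⟩
  have := intConst hgc (fun p => (hint p).imp fun n hn => hn) p (0, 0)
  rw [hn₀] at this
  have hfst : (D p).1 = p.1 + (n₀ : ℝ) := by linarith
  exact Prod.ext hfst (h2 p)

def sh (p : ℝ) (j : ℤ) (x : AddCircle p × ℝ) : AddCircle p × ℝ :=
  (x.1 + ((j : ℝ) : AddCircle p), x.2)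

lemma sh_dist (p : ℝ) (j : ℤ) (x y : AddCircle p × ℝ) :
    dist (sh p j x) (sh p j y) = dist x y := by
  simp [sh, Prod.dist_eq, dist_add_right]

lemma sh_sh (p : ℝ) (j k : ℤ) (x : AddCircle p × ℝ) :
    sh p j (sh p k x) = sh p (j + k) x := by
  simp only [sh]
  refine Prod.ext ?_ rfl
  have : ((j : ℝ) + (k : ℝ) : ℝ) = (((j + k : ℤ) : ℝ)) := by push_cast; ring
  rw [add_assoc, ← AddCircle.coe_add p, add_comm ((k:ℝ)) ((j:ℝ)), this]

lemma sh_prjq (q : ℕ) (j : ℤ) (x : Plane) : sh (q:ℝ) j (prjq q x) = prjq q (Tr j x) := by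
  simp only [sh, prjq, Tr]
  exact Prod.ext (AddCircle.coe_add (q:ℝ) _ _).symm rfl

lemma sh_dvd (q : ℕ) (j : ℤ) (h : (q:ℤ) ∣ j) (x : AddCircle (q:ℝ) × ℝ) :
    sh (q:ℝ) j x = x := by
  obtain ⟨t, rfl⟩ := h
  have hz : ((((q:ℤ) * t : ℤ) : ℝ) : AddCircle (q:ℝ)) = 0 :=
    (AddCircle.coe_eq_zero_iff (q:ℝ)).mpr ⟨t, by rw [zsmul_eq_mul]; push_cast; ring⟩
  show (x.1 + _, x.2) = x
  rw [hz, add_zero]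

lemma dist_prjq_le (q : ℕ) (a b : Plane) : dist (prjq q a) (prjq q b) ≤ dist a b := by
  simp only [prjq, Prod.dist_eq]
  refine max_le_max ?_ le_rfl
  rw [dist_eq_norm, ← QuotientAddGroup.mk_sub, Real.dist_eq]
  exact (QuotientAddGroup.norm_mk_le_norm).trans (le_of_eq (Real.norm_eq_abs _))

lemma dist_round (a b : Plane) :
    dist a (Tr (round (a.1 - b.1)) b) = dist (prj a) (prj b) := by
  simp only [prj, Tr, Prod.dist_eq]
  congr 1
  rw [Real.dist_eq, dist_eq_norm, ← QuotientAddGroup.mk_sub, AddCircle.norm_eq]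
  rw [inv_one, one_mul, mul_one]
  congr 1
  ring

def Jf (e a : ℤ) : ℕ → ℤ → ℤ
  | 0, j => j
  | t+1, j => Jf e a t (j * e + a)

lemma Jf_two (e a : ℤ) (he : e * e = 1) : ∀ (t : ℕ) (j : ℤ),
    Jf e a (2*t) j = j + t * ((e + 1) * a) := by
  intro t
  induction t with
  | zero => intro j; simp [Jf]
  | succ t ih =>
    intro j
    have h2 : 2 * (t + 1) = (2 * t + 1) + 1 := by ring
    rw [h2]
    show Jf e a (2*t) ((j * e + a) * e + a) = _
    rw [ih]
    have h3 : (j * e + a) * e + a = j + (e + 1) * a := by linear_combination j * he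
    rw [h3]
    push_cast
    ring

lemma TrTr (a b : ℤ) (x : Plane) : Tr a (Tr b x) = Tr (a + b) x := by
  simp only [Tr]
  refine Prod.ext ?_ rfl
  push_cast
  ring

lemma Tr_zero (x : Plane) : Tr 0 x = x := by
  simp [Tr]

lemma Tr_continuous (k : ℤ) : Continuous (Tr k) :=
  (continuous_fst.add continuous_const).prodMk continuous_snd

end Lem62

open Lem62

/-- Lemma 6.2: let `f_q` be the homeomorphism of the annulus `𝔸_q = ℝ²/T^q` lifted by
`F`. If `z ∈ Rec⁺(f)` and `z̃ ∈ π⁻¹(z)`, then `π_q(z̃) ∈ Rec⁺(f_q^q)`. -/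
theorem posRec_intermediate_cover
    (f : Ann ≃ₜ Ann) (F : Plane ≃ₜ Plane)
    (hiso : IsotopicToId f) (hlift : IsLift f F)
    (q : ℕ) (hq : 1 ≤ q)
    (fq : (AddCircle (q : ℝ) × ℝ) ≃ₜ (AddCircle (q : ℝ) × ℝ))
    (hliftq : ∀ p : Plane, prjq q (F p) = fq (prjq q p))
    (z : Ann) (zt : Plane) (hzt : prj zt = z) (hrec : PosRec ⇑f z) :
    PosRec ((⇑fq)^[q]) (prjq q zt) := by
  classical
  haveI : NeZero q := ⟨by omega⟩
  subst hzt
  -- lift of the inverse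
  have hlift_symm : ∀ p : Plane, prj (F.symm p) = f.symm (prj p) := by
    intro p
    have h := hlift (F.symm p)
    rw [F.apply_symm_apply] at h
    rw [h, f.symm_apply_apply]
  have hprjTr : ∀ p : Plane, prj (Tr 1 p) = prj p := by
    intro p
    simp only [prj, Tr]
    refine Prod.ext ?_ rfl
    show ((p.1 + ((1:ℤ):ℝ) : ℝ) : AddCircle (1:ℝ)) = _
    norm_num
  -- the deck translation constant
  obtain ⟨m, hmF⟩ := deckRigid (fun p => F (Tr 1 (F.symm p)))
    (F.continuous.comp ((Tr_continuous 1).comp F.symm.continuous))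
    (fun p => by
      show prj (F (Tr 1 (F.symm p))) = prj p
      rw [hlift, hprjTr, hlift_symm, f.apply_symm_apply])
  obtain ⟨m', hm'F⟩ := deckRigid (fun p => F.symm (Tr 1 (F p)))
    (F.symm.continuous.comp ((Tr_continuous 1).comp F.continuous))
    (fun p => by
      show prj (F.symm (Tr 1 (F p))) = prj p
      rw [hlift_symm, hprjTr, hlift, f.symm_apply_apply])
  have hFT : ∀ p, F (Tr 1 p) = Tr m (F p) := by
    intro p
    have h := hmF (F p)
    rwa [F.symm_apply_apply] at h
  have hFTsymm : ∀ p, F.symm (Tr 1 p) = Tr m' (F.symm p) := by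
    intro p
    have h := hm'F (F.symm p)
    rwa [F.apply_symm_apply] at h
  have hFTk : ∀ (k : ℤ) (p : Plane), F (Tr k p) = Tr (k * m) (F p) := by
    intro k
    induction k using Int.induction_on with
    | zero => intro p; rw [Tr_zero, zero_mul, Tr_zero]
    | succ k ih =>
      intro p
      have h1 : Tr ((k:ℤ)+1) p = Tr 1 (Tr k p) := by rw [TrTr]; ring_nf
      rw [h1, hFT, ih, TrTr]
      ring_nf
    | pred k ih =>
      intro p
      have h1 : Tr (-(k:ℤ)) p = Tr 1 (Tr (-(k:ℤ)-1) p) := by rw [TrTr]; ring_nf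
      have h2 := ih p
      rw [h1, hFT] at h2
      have h3 := congrArg (Tr (-m)) h2.symm
      rw [TrTr, TrTr] at h3
      have h4 : (-m + m) = 0 := by ring
      rw [h4, Tr_zero] at h3
      have h5 : ((-(k:ℤ)-1) * m) = -m + -(k:ℤ) * m := by ring
      rw [h5]
      exact h3.symm
  have hmm' : m' * m = 1 := by
    have h := hFTk m' (F.symm (Tr 1 (0, 0)))
    rw [← hFTsymm, F.apply_symm_apply, F.apply_symm_apply] at h
    have h1 := congrArg Prod.fst h
    simp only [Tr] at h1
    have : ((1:ℤ):ℝ) = ((m' * m : ℤ) : ℝ) := by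
      push_cast at h1 ⊢
      linarith
    exact_mod_cast this.symm
  have hm1 : m = 1 ∨ m = -1 :=
    Int.isUnit_iff.mp (IsUnit.of_mul_eq_one m' (by rw [mul_comm]; exact hmm'))
  -- commutation downstairs
  have hprjq_surj : Function.Surjective (prjq q) := by
    intro x
    obtain ⟨a, ha⟩ := Quotient.exists_rep x.1
    exact ⟨(a, x.2), Prod.ext ha rfl⟩
  have hfq_sh : ∀ (j : ℤ) (x : AddCircle (q:ℝ) × ℝ),
      fq (sh (q:ℝ) j x) = sh (q:ℝ) (j * m) (fq x) := by
    intro j x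
    obtain ⟨p, rfl⟩ := hprjq_surj x
    rw [sh_prjq, ← hliftq, ← hliftq, hFTk, ← sh_prjq]
  have hfq_iter_sh : ∀ (nn : ℕ) (j : ℤ) (x : AddCircle (q:ℝ) × ℝ),
      (⇑fq)^[nn] (sh (q:ℝ) j x) = sh (q:ℝ) (j * m ^ nn) (fq^[nn] x) := by
    intro nn
    induction nn with
    | zero => intro j x; simp
    | succ t ih =>
      intro j x
      rw [Function.iterate_succ_apply, Function.iterate_succ_apply, hfq_sh, ih]
      have hpow : j * m ^ (t+1) = (j * m) * m ^ t := by rw [pow_succ]; ring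
      rw [hpow]
  have hlift_iter : ∀ (nn : ℕ) (p : Plane), prj (F^[nn] p) = (⇑f)^[nn] (prj p) := by
    intro nn
    induction nn with
    | zero => intro p; rfl
    | succ t ih =>
      intro p
      rw [Function.iterate_succ_apply', Function.iterate_succ_apply', hlift, ih]
  have hliftq_iter : ∀ (nn : ℕ) (p : Plane),
      prjq q (F^[nn] p) = (⇑fq)^[nn] (prjq q p) := by
    intro nn
    induction nn with
    | zero => intro p; rfl
    | succ t ih =>
      intro p
      rw [Function.iterate_succ_apply', Function.iterate_succ_apply', hliftq, ih]
  obtain ⟨ψ, hψ, hten⟩ := hrec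
  set mk_ : ℕ → ℤ := fun k => round ((F^[ψ k] zt).1 - zt.1) with hmk
  have hd0 : Tendsto (fun k => dist (F^[ψ k] zt) (Tr (mk_ k) zt)) atTop (𝓝 0) := by
    have h1 : Tendsto (fun k => dist ((⇑f)^[ψ k] (prj zt)) (prj zt)) atTop (𝓝 0) :=
      tendsto_iff_dist_tendsto_zero.mp hten
    have h2 : ∀ k, dist (F^[ψ k] zt) (Tr (mk_ k) zt)
        = dist ((⇑f)^[ψ k] (prj zt)) (prj zt) := by
      intro k
      rw [← hlift_iter]
      exact dist_round (F^[ψ k] zt) zt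
    exact Tendsto.congr (fun k => (h2 k).symm) h1
  -- pigeonhole
  let hfun : ℕ → ZMod q × ZMod q × ZMod 2 :=
    fun k => ((mk_ k : ZMod q), ((ψ k : ℕ) : ZMod q), ((ψ k : ℕ) : ZMod 2))
  obtain ⟨v, hv⟩ := Finite.exists_infinite_fiber hfun
  have hvinf : {k : ℕ | hfun k = v}.Infinite := Set.infinite_coe_iff.mp hv
  set θ := Nat.nth (fun k => hfun k = v) with hθdef
  have hθ : StrictMono θ := Nat.nth_strictMono hvinf
  have hθmem : ∀ i, hfun (θ i) = v := fun i => Nat.nth_mem_of_infinite hvinf i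
  set n : ℕ → ℕ := fun i => ψ (θ i) with hndef
  set a : ℕ → ℤ := fun i => mk_ (θ i) with hadef
  have hn : StrictMono n := hψ.comp hθ
  have hEq : ∀ i, hfun (θ i) = hfun (θ 0) := fun i => (hθmem i).trans (hθmem 0).symm
  have haZ : ∀ i, ((a i : ZMod q)) = ((a 0 : ZMod q)) :=
    fun i => congrArg (fun t => t.1) (hEq i)
  have hnZ : ∀ i, ((n i : ℕ) : ZMod q) = ((n 0 : ℕ) : ZMod q) :=
    fun i => congrArg (fun t => t.2.1) (hEq i)
  have hpm : ∀ t : ℕ, m ^ t = 1 ∨ m ^ t = -1 := by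
    intro t
    rcases hm1 with h | h
    · left; rw [h, one_pow]
    · rw [h]
      rcases Nat.even_or_odd t with he | ho
      · left; exact he.neg_one_pow
      · right; exact ho.neg_one_pow
  obtain ⟨e, he_def⟩ : ∃ e : ℤ, e = m ^ (n 0) := ⟨_, rfl⟩
  have hme : ∀ i, m ^ (n i) = e := by
    intro i
    rw [he_def]
    have hpar : ((n i : ℕ) : ZMod 2) = ((n 0 : ℕ) : ZMod 2) :=
      congrArg (fun t => t.2.2) (hEq i)
    have hmod : n i % 2 = n 0 % 2 := (ZMod.natCast_eq_natCast_iff _ _ _).mp hpar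
    rcases hm1 with h | h
    · rw [h, one_pow, one_pow]
    · rw [h]
      rcases Nat.even_or_odd (n i) with hev | hod
      · have hev0 : Even (n 0) := by rw [Nat.even_iff] at hev ⊢; omega
        rw [hev.neg_one_pow, hev0.neg_one_pow]
      · have hod0 : Odd (n 0) := by rw [Nat.odd_iff] at hod ⊢; omega
        rw [hod.neg_one_pow, hod0.neg_one_pow]
  have hee : e * e = 1 := by
    rw [he_def]
    rcases hpm (n 0) with h | h <;> rw [h] <;> norm_num
  set w := prjq q zt with hw
  have hdist2 : Tendsto (fun i => dist ((⇑fq)^[n i] w) (sh (q:ℝ) (a 0) w)) atTop (𝓝 0) := by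
    have hsub : Tendsto (fun i => dist (F^[n i] zt) (Tr (a i) zt)) atTop (𝓝 0) :=
      hd0.comp hθ.tendsto_atTop
    refine squeeze_zero (fun i => dist_nonneg) (fun i => ?_) hsub
    have hdvd : (q:ℤ) ∣ (a 0 - a i) := by
      have h := (ZMod.intCast_eq_intCast_iff _ _ _).mp (haZ i)
      exact h.dvd
    have h1 : sh (q:ℝ) (a 0) w = sh (q:ℝ) (a i) w := by
      rw [show a 0 = (a 0 - a i) + a i by ring, ← sh_sh, sh_dvd q _ hdvd]
    rw [h1, hw, ← hliftq_iter, sh_prjq]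
    exact dist_prjq_le q _ _
  -- the single-step lemma
  have step : ∀ (j : ℤ) (δ : ℝ), 0 < δ → ∀ K : ℕ, ∃ i : ℕ, K ≤ n i ∧
      ∃ δ' : ℝ, 0 < δ' ∧ ∀ u : AddCircle (q:ℝ) × ℝ, dist u (sh (q:ℝ) j w) < δ' →
        dist ((⇑fq)^[n i] u) (sh (q:ℝ) (j * e + a 0) w) < δ := by
    intro j δ hδ K
    have h1 : ∀ᶠ i in atTop, dist ((⇑fq)^[n i] w) (sh (q:ℝ) (a 0) w) < δ/2 :=
      hdist2.eventually (gt_mem_nhds (half_pos hδ))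
    have h2 : ∀ᶠ i in atTop, K ≤ n i := hn.tendsto_atTop.eventually_ge_atTop K
    obtain ⟨i, hi1, hi2⟩ := (h1.and h2).exists
    refine ⟨i, hi2, ?_⟩
    have hcont : Continuous ((⇑fq)^[n i]) := fq.continuous.iterate _
    obtain ⟨δ', hδ', hball⟩ :=
      Metric.continuousAt_iff.mp (hcont.continuousAt (x := sh (q:ℝ) j w)) (δ/2) (half_pos hδ)
    refine ⟨δ', hδ', fun u hu => ?_⟩
    have hmid : dist ((⇑fq)^[n i] (sh (q:ℝ) j w)) (sh (q:ℝ) (j * e + a 0) w) < δ/2 := by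
      rw [hfq_iter_sh, hme i]
      have hh : sh (q:ℝ) (j * e + a 0) w = sh (q:ℝ) (j * e) (sh (q:ℝ) (a 0) w) := by
        rw [sh_sh]
      rw [hh, sh_dist]
      exact hi1
    calc dist ((⇑fq)^[n i] u) (sh (q:ℝ) (j * e + a 0) w)
        ≤ dist ((⇑fq)^[n i] u) ((⇑fq)^[n i] (sh (q:ℝ) j w))
          + dist ((⇑fq)^[n i] (sh (q:ℝ) j w)) (sh (q:ℝ) (j * e + a 0) w) :=
          dist_triangle _ _ _
      _ < δ/2 + δ/2 := add_lt_add (hball hu) hmid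
      _ = δ := add_halves δ
  -- the chain lemma
  have chain : ∀ (t : ℕ) (j : ℤ) (ε : ℝ), 0 < ε → ∀ M : ℕ,
      ∃ (T : ℕ) (δ : ℝ), (1 ≤ t → M ≤ T) ∧
        ((T : ZMod q)) = (t : ZMod q) * ((n 0 : ℕ) : ZMod q) ∧ 0 < δ ∧
        ∀ u : AddCircle (q:ℝ) × ℝ, dist u (sh (q:ℝ) j w) < δ →
          dist ((⇑fq)^[T] u) (sh (q:ℝ) (Jf e (a 0) t j) w) < ε := by
    intro t
    induction t with
    | zero =>
      intro j ε hε M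
      exact ⟨0, ε, fun h => absurd h (by omega), by simp, hε,
        fun u hu => by simpa [Jf] using hu⟩
    | succ t ih =>
      intro j ε hε M
      obtain ⟨T', δ', hT1, hTz, hδ', hu'⟩ := ih (j * e + a 0) ε hε 0
      obtain ⟨i, hKi, δ'', hδ'', hstep⟩ := step j δ' hδ' M
      refine ⟨T' + n i, δ'', fun _ => le_trans hKi (Nat.le_add_left _ _), ?_, hδ'',
        fun u hu => ?_⟩
      · push_cast
        rw [hTz, hnZ i]
        push_cast
        ring
      · rw [Function.iterate_add_apply]
        exact hu' _ (hstep u hu)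
  -- main estimate
  have KEY : ∀ ε : ℝ, 0 < ε → ∀ M : ℕ, ∃ N : ℕ, M ≤ N ∧
      dist ((⇑fq)^[q * N] w) w < ε := by
    intro ε hε M
    obtain ⟨T, δ, hT1, hTz, hδ, hu⟩ := chain (2*q) 0 ε hε (q * (M+1))
    have hTdvd : q ∣ T := by
      have h : ((T : ℕ) : ZMod q) = 0 := by
        rw [hTz]
        push_cast
        simp [ZMod.natCast_self]
      exact (ZMod.natCast_eq_zero_iff _ _).mp h
    obtain ⟨N, rfl⟩ := hTdvd
    have hqpos : 0 < q := hq
    have hMN : M ≤ N := by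
      have h1 := hT1 (by omega)
      have h2 := Nat.le_of_mul_le_mul_left h1 hqpos
      omega
    refine ⟨N, hMN, ?_⟩
    have h0 : dist w (sh (q:ℝ) 0 w) < δ := by
      have hh : sh (q:ℝ) 0 w = w := by
        show (w.1 + _, w.2) = w
        norm_num
      rw [hh, dist_self]
      exact hδ
    have h := hu w h0
    have hJ : sh (q:ℝ) (Jf e (a 0) (2*q) 0) w = w := by
      rw [Jf_two e (a 0) hee q 0]
      exact sh_dvd q _ ⟨(e+1) * a 0, by push_cast; ring⟩ w
    rwa [hJ] at h
  -- build the subsequence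
  have H : ∀ (k M : ℕ), ∃ N, M < N ∧ dist ((⇑fq)^[q * N] w) w < 1/((k:ℝ)+1) := by
    intro k M
    obtain ⟨N, hN, hd⟩ := KEY (1/((k:ℝ)+1)) (by positivity) (M+1)
    exact ⟨N, by omega, hd⟩
  choose u hu1 hu2 using H
  let φ : ℕ → ℕ := fun k => Nat.rec (u 0 0) (fun k ih => u (k+1) ih) k
  have hφmono : StrictMono φ := strictMono_nat_of_lt_succ (fun k => hu1 (k+1) (φ k))
  have hφd : ∀ k, dist ((⇑fq)^[q * φ k] w) w < 1/((k:ℝ)+1) := by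
    intro k
    cases k with
    | zero => exact hu2 0 0
    | succ k => exact hu2 (k+1) (φ k)
  refine ⟨φ, hφmono, ?_⟩
  rw [tendsto_iff_dist_tendsto_zero]
  refine squeeze_zero (fun k => dist_nonneg) (fun k => ?_)
    tendsto_one_div_add_atTop_nhds_zero_nat
  rw [← Function.iterate_mul]
  exact (hφd k).le
end
end
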